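/- Processing each unfinished job j at rate w_j / w(U_t) on a single machine (where U_t is the set of unfinished jobs and w(U_t) their total weight) is a 2-competitive non-clairvoyant strategy for minimizing total weighted completion time of independent jobs: the resulting schedule ALG satisfies ∑_j w_j C_j^{ALG} ≤ 2 ∑_j w_j C_j^{OPT} for every instance, where OPT is an optimal (clairvoyant) single-machine schedule. -/

import Mathlib

open MeasureTheory

set_option maxHeartbeats 1000000 in
/-- Processing every unfinished job `j` at rate `w j / w(U_t)` on a
single machine (no precedence constraints) is `2`-competitive: the schedule ALG
(rates `R`, completion times `C`) satisfies `∑ w C ≤ 2 ∑ w C'` for every feasible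
single-machine schedule (rates `R'`, completion times `C'`). -/
theorem stmt_9 (n : ℕ) (p w : Fin n → ℝ) (hp : ∀ j, 0 < p j) (hw : ∀ j, 0 ≤ w j)
    (hwsum : 0 < ∑ j, w j)
    -- the algorithm's schedule
    (R : Fin n → ℝ → ℝ) (hRmeas : ∀ j, Measurable (R j))
    (C : Fin n → ℝ)
    (hrate : ∀ j, ∀ t, 0 ≤ t →
      (t < C j → R j t = w j / ∑ k ∈ Finset.univ.filter (fun k => t < C k), w k) ∧
      (C j ≤ t → R j t = 0))
    (hC0 : ∀ j, 0 ≤ C j)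
    (hCdone : ∀ j, p j ≤ ∫ s in (0:ℝ)..(C j), R j s)
    (hCmin : ∀ j t, 0 ≤ t → p j ≤ ∫ s in (0:ℝ)..t, R j s → C j ≤ t)
    -- an arbitrary feasible (clairvoyant) schedule, in particular an optimal one
    (R' : Fin n → ℝ → ℝ) (hR'meas : ∀ j, Measurable (R' j))
    (hR'0 : ∀ j t, 0 ≤ R' j t) (hR'1 : ∀ j t, R' j t ≤ 1)
    (hR'sum : ∀ t, ∑ j, R' j t ≤ 1)
    (C' : Fin n → ℝ) (hC'0 : ∀ j, 0 ≤ C' j)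
    (hC'done : ∀ j, p j ≤ ∫ s in (0:ℝ)..(C' j), R' j s)
    (hC'min : ∀ j t, 0 ≤ t → p j ≤ ∫ s in (0:ℝ)..t, R' j s → C' j ≤ t) :
    ∑ j, w j * C j ≤ 2 * ∑ j, w j * C' j := by
  classical
  -- nonnegativity of ALG rates at nonnegative times
  have hR0' : ∀ j t, 0 ≤ t → 0 ≤ R j t := by
    intro j t ht
    rcases lt_or_ge t (C j) with h | h
    · rw [(hrate j t ht).1 h]
      exact div_nonneg (hw j) (Finset.sum_nonneg fun k _ => hw k)
    · rw [(hrate j t ht).2 h]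
  -- all weights are positive, else the job could never complete
  have hwpos : ∀ j, 0 < w j := by
    intro j
    rcases (hw j).lt_or_eq with h | h
    · exact h
    · exfalso
      have hz : ∀ s ∈ Set.uIcc (0:ℝ) (C j), R j s = 0 := by
        intro s hs
        rw [Set.uIcc_of_le (hC0 j)] at hs
        rcases lt_or_ge s (C j) with h' | h'
        · rw [(hrate j s hs.1).1 h', ← h]
          simp
        · exact (hrate j s hs.1).2 h'
      have hint : ∫ s in (0:ℝ)..(C j), R j s = 0 := by
        rw [intervalIntegral.integral_congr hz]
        simp
      have := hCdone j
      rw [hint] at this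
      exact absurd this (not_le.2 (hp j))
  -- ALG rates are at most 1
  have hR1 : ∀ j t, 0 ≤ t → R j t ≤ 1 := by
    intro j t ht
    rcases lt_or_ge t (C j) with h | h
    · rw [(hrate j t ht).1 h]
      have hmem : j ∈ Finset.univ.filter (fun k => t < C k) := by
        simp [h]
      have hle : w j ≤ ∑ k ∈ Finset.univ.filter (fun k => t < C k), w k :=
        Finset.single_le_sum (fun k _ => hw k) hmem
      exact div_le_one_of_le₀ hle (Finset.sum_nonneg fun k _ => hw k)
    · rw [(hrate j t ht).2 h]; norm_num
  -- integrability of bounded measurable rates on nonnegative intervals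
  have hII : ∀ (f : ℝ → ℝ), Measurable f → (∀ t, 0 ≤ t → 0 ≤ f t) →
      (∀ t, 0 ≤ t → f t ≤ 1) →
      ∀ a b : ℝ, 0 ≤ a → 0 ≤ b → IntervalIntegrable f volume a b := by
    intro f hm h0 h1 a b ha hb
    rw [intervalIntegrable_iff]
    refine MeasureTheory.Integrable.mono'
      (g := fun _ => (1:ℝ)) (integrableOn_const measure_Ioc_lt_top.ne)
      hm.aestronglyMeasurable.restrict ?_
    filter_upwards [MeasureTheory.ae_restrict_mem measurableSet_Ioc] with x hx
    have hx0 : 0 ≤ x := le_trans (le_min ha hb) hx.1.le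
    rw [Real.norm_eq_abs, abs_of_nonneg (h0 x hx0)]
    exact h1 x hx0
  have hIIR : ∀ j (a b : ℝ), 0 ≤ a → 0 ≤ b → IntervalIntegrable (R j) volume a b :=
    fun j => hII (R j) (hRmeas j) (hR0' j) (hR1 j)
  have hIIR' : ∀ j (a b : ℝ), 0 ≤ a → 0 ≤ b → IntervalIntegrable (R' j) volume a b :=
    fun j => hII (R' j) (hR'meas j) (fun t _ => hR'0 j t) (fun t _ => hR'1 j t)
  -- monotonicity of work functions
  have hmono : ∀ (f : ℝ → ℝ), (∀ t, 0 ≤ t → 0 ≤ f t) →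
      (∀ a b : ℝ, 0 ≤ a → 0 ≤ b → IntervalIntegrable f volume a b) →
      ∀ a b : ℝ, 0 ≤ a → a ≤ b →
      (∫ s in (0:ℝ)..a, f s) ≤ ∫ s in (0:ℝ)..b, f s := by
    intro f h0 hint a b ha hab
    have hb : 0 ≤ b := le_trans ha hab
    have hsplit := intervalIntegral.integral_add_adjacent_intervals
      (hint 0 a le_rfl ha) (hint a b ha hb)
    have hnn : 0 ≤ ∫ s in a..b, f s :=
      intervalIntegral.integral_nonneg hab (fun u hu => h0 u (le_trans ha hu.1))
    linarith
  have hmonoR : ∀ j (a b : ℝ), 0 ≤ a → a ≤ b →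
      (∫ s in (0:ℝ)..a, R j s) ≤ ∫ s in (0:ℝ)..b, R j s :=
    fun j => hmono (R j) (hR0' j) (hIIR j)
  have hmonoR' : ∀ j (a b : ℝ), 0 ≤ a → a ≤ b →
      (∫ s in (0:ℝ)..a, R' j s) ≤ ∫ s in (0:ℝ)..b, R' j s :=
    fun j => hmono (R' j) (fun t _ => hR'0 j t) (hIIR' j)
  -- completion times are positive
  have hCpos : ∀ j, 0 < C j := by
    intro j
    rcases (hC0 j).lt_or_eq with h | h
    · exact h
    · exfalso
      have := hCdone j
      rw [← h] at this
      simp at this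
      exact absurd this (not_le.2 (hp j))
  -- at completion, exactly p j work has been done
  have hWCj : ∀ j, ∫ s in (0:ℝ)..(C j), R j s = p j := by
    intro j
    refine le_antisymm ?_ (hCdone j)
    refine le_of_forall_pos_le_add ?_
    intro ε hε
    set t := max 0 (C j - ε) with ht_def
    have ht0 : 0 ≤ t := le_max_left _ _
    have htlt : t < C j := max_lt (hCpos j) (by linarith)
    have h1 := intervalIntegral.integral_add_adjacent_intervals
      (hIIR j 0 t le_rfl ht0) (hIIR j t (C j) ht0 (hC0 j))
    have h2 : (∫ s in t..(C j), R j s) ≤ ∫ s in t..(C j), (1:ℝ) := by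
      refine intervalIntegral.integral_mono_on htlt.le
        (hIIR j t (C j) ht0 (hC0 j)) intervalIntegrable_const ?_
      intro x hx
      exact hR1 j x (le_trans ht0 hx.1)
    have h2' : (∫ s in t..(C j), (1:ℝ)) = C j - t := by simp
    have h3 : (∫ s in (0:ℝ)..t, R j s) < p j := by
      by_contra hcon
      push_neg at hcon
      exact absurd (hCmin j t ht0 hcon) (not_le.2 htlt)
    have h4 : C j - t ≤ ε := by
      have := le_max_right 0 (C j - ε)
      linarith
    linarith
  -- proportional progress while both jobs are alive
  have hprop : ∀ j k, w k * ∫ s in (0:ℝ)..(min (C j) (C k)), R j s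
      = w j * ∫ s in (0:ℝ)..(min (C j) (C k)), R k s := by
    intro j k
    set m := min (C j) (C k) with hm_def
    have hm0 : 0 ≤ m := le_min (hC0 j) (hC0 k)
    rw [← intervalIntegral.integral_const_mul, ← intervalIntegral.integral_const_mul]
    apply intervalIntegral.integral_congr_ae
    have hae : ∀ᵐ x : ℝ, x ≠ m := by
      rw [MeasureTheory.ae_iff]
      have : {x : ℝ | ¬ x ≠ m} = {m} := by ext x; simp
      rw [this]
      exact measure_singleton m
    filter_upwards [hae] with x hxne hx
    rw [Set.uIoc_of_le hm0] at hx
    have hx0 : 0 < x := hx.1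
    have hxm : x < m := lt_of_le_of_ne hx.2 hxne
    have hxj : x < C j := lt_of_lt_of_le hxm (min_le_left _ _)
    have hxk : x < C k := lt_of_lt_of_le hxm (min_le_right _ _)
    rw [(hrate j x hx0.le).1 hxj, (hrate k x hx0.le).1 hxk]
    ring
  -- total rate is 1 before C j, so C j equals total work done
  have hsum1 : ∀ j, ∑ k, (∫ s in (0:ℝ)..(C j), R k s) = C j := by
    intro j
    rw [← intervalIntegral.integral_finset_sum
      (fun k _ => hIIR k 0 (C j) le_rfl (hC0 j))]
    have hcongr : (∫ s in (0:ℝ)..(C j), ∑ k, R k s)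
        = ∫ s in (0:ℝ)..(C j), (1:ℝ) := by
      apply intervalIntegral.integral_congr_ae
      have hae : ∀ᵐ x : ℝ, x ≠ C j := by
        rw [MeasureTheory.ae_iff]
        have : {x : ℝ | ¬ x ≠ C j} = {C j} := by ext x; simp
        rw [this]
        exact measure_singleton (C j)
      filter_upwards [hae] with x hxne hx
      rw [Set.uIoc_of_le (hC0 j)] at hx
      have hx0 : 0 < x := hx.1
      have hxj : x < C j := lt_of_le_of_ne hx.2 hxne
      have hterm : ∀ k, R k x = if x < C k then
          w k / ∑ i ∈ Finset.univ.filter (fun i => x < C i), w i else 0 := by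
        intro k
        split_ifs with hk
        · exact (hrate k x hx0.le).1 hk
        · exact (hrate k x hx0.le).2 (not_lt.1 hk)
      calc ∑ k, R k x
          = ∑ k, (if x < C k then
            w k / ∑ i ∈ Finset.univ.filter (fun i => x < C i), w i else 0) :=
            Finset.sum_congr rfl (fun k _ => hterm k)
        _ = ∑ k ∈ Finset.univ.filter (fun k => x < C k),
            w k / ∑ i ∈ Finset.univ.filter (fun i => x < C i), w i :=
            (Finset.sum_filter _ _).symm
        _ = (∑ k ∈ Finset.univ.filter (fun k => x < C k), w k)
            / ∑ i ∈ Finset.univ.filter (fun i => x < C i), w i := by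
            rw [Finset.sum_div]
        _ = 1 := by
            apply div_self
            have hmem : j ∈ Finset.univ.filter (fun k => x < C k) := by simp [hxj]
            have : 0 < ∑ k ∈ Finset.univ.filter (fun k => x < C k), w k :=
              lt_of_lt_of_le (hwpos j) (Finset.single_le_sum (fun k _ => hw k) hmem)
            exact ne_of_gt this
    rw [hcongr]
    simp
  -- key per-pair upper bound on work received by k before C j
  have hle : ∀ j k, (∫ s in (0:ℝ)..(C j), R k s)
      ≤ w k * min (p j / w j) (p k / w k) := by
    intro j k
    rw [mul_min_of_nonneg _ _ (hw k)]
    have hpkk : w k * (p k / w k) = p k := by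
      rw [mul_comm]; exact div_mul_cancel₀ _ (hwpos k).ne'
    rcases le_total (C k) (C j) with hkj | hjk
    · -- k finishes first (or tied)
      have hzero : (∫ s in (C k)..(C j), R k s) = 0 := by
        have : ∀ s ∈ Set.uIcc (C k) (C j), R k s = 0 := by
          intro s hs
          rw [Set.uIcc_of_le hkj] at hs
          exact (hrate k s (le_trans (hC0 k) hs.1)).2 hs.1
        rw [intervalIntegral.integral_congr this]
        simp
      have hsplit := intervalIntegral.integral_add_adjacent_intervals
        (hIIR k 0 (C k) le_rfl (hC0 k)) (hIIR k (C k) (C j) (hC0 k) (hC0 j))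
      have heq : (∫ s in (0:ℝ)..(C j), R k s) = p k := by
        rw [← hsplit, hzero, hWCj k]; ring
      rw [heq]
      refine le_min ?_ (le_of_eq hpkk.symm)
      -- p k ≤ w k * (p j / w j) from proportionality at C k
      have hmin_eq : min (C j) (C k) = C k := min_eq_right hkj
      have hpr := hprop j k
      rw [hmin_eq] at hpr
      have h1 : (∫ s in (0:ℝ)..(C k), R j s) ≤ p j := by
        rw [← hWCj j]
        exact hmonoR j (C k) (C j) (hC0 k) hkj
      have h2 : w j * p k ≤ w k * p j := by
        have hCk : (∫ s in (0:ℝ)..(C k), R k s) = p k := hWCj k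
        rw [hCk] at hpr
        calc w j * p k = w k * ∫ s in (0:ℝ)..(C k), R j s := hpr.symm
          _ ≤ w k * p j := by
            exact mul_le_mul_of_nonneg_left h1 (hw k)
      rw [show w k * (p j / w j) = w k * p j / w j by ring,
        le_div_iff₀ (hwpos j)]
      nlinarith [hwpos j, hwpos k]
    · -- j finishes first (or tied)
      have hmin_eq : min (C j) (C k) = C j := min_eq_left hjk
      have hpr := hprop j k
      rw [hmin_eq, hWCj j] at hpr
      refine le_min ?_ ?_
      · rw [show w k * (p j / w j) = w k * p j / w j by ring,
          le_div_iff₀ (hwpos j)]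
        nlinarith [hpr]
      · rw [hpkk, ← hWCj k]
        exact hmonoR k (C j) (C k) (hC0 j) hjk
  -- hence C j ≤ ∑_k w_k min(r_j, r_k)
  have hCle : ∀ j, C j ≤ ∑ k, w k * min (p j / w j) (p k / w k) := by
    intro j
    rw [← hsum1 j]
    exact Finset.sum_le_sum (fun k _ => hle j k)
  -- ALG bound: ∑ w C ≤ ∑_{j,k} min(w_k p_j, w_j p_k)
  have hmin_eq : ∀ j k, w j * (w k * min (p j / w j) (p k / w k))
      = min (w k * p j) (w j * p k) := by
    intro j k
    have hj := (hwpos j).ne'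
    have hk := (hwpos k).ne'
    rw [mul_min_of_nonneg _ _ (hw k), mul_min_of_nonneg _ _ (hw j)]
    congr 1 <;> field_simp <;> ring
  have hALG : ∑ j, w j * C j ≤ ∑ j, ∑ k, min (w k * p j) (w j * p k) := by
    calc ∑ j, w j * C j
        ≤ ∑ j, w j * ∑ k, w k * min (p j / w j) (p k / w k) :=
          Finset.sum_le_sum (fun j _ =>
            mul_le_mul_of_nonneg_left (hCle j) (hw j))
      _ = ∑ j, ∑ k, min (w k * p j) (w j * p k) := by
          refine Finset.sum_congr rfl (fun j _ => ?_)
          rw [Finset.mul_sum]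
          exact Finset.sum_congr rfl (fun k _ => hmin_eq j k)
  -- machine capacity bound for the feasible schedule
  have hCap : ∀ j, (∑ k ∈ Finset.univ.filter (fun k => C' k ≤ C' j), p k) ≤ C' j := by
    intro j
    have h1 : ∀ k ∈ Finset.univ.filter (fun k => C' k ≤ C' j),
        p k ≤ ∫ s in (0:ℝ)..(C' j), R' k s := by
      intro k hk
      rw [Finset.mem_filter] at hk
      exact le_trans (hC'done k) (hmonoR' k (C' k) (C' j) (hC'0 k) hk.2)
    calc (∑ k ∈ Finset.univ.filter (fun k => C' k ≤ C' j), p k)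
        ≤ ∑ k ∈ Finset.univ.filter (fun k => C' k ≤ C' j),
          ∫ s in (0:ℝ)..(C' j), R' k s := Finset.sum_le_sum h1
      _ = ∫ s in (0:ℝ)..(C' j),
          (∑ k ∈ Finset.univ.filter (fun k => C' k ≤ C' j), R' k s) :=
          (intervalIntegral.integral_finset_sum
            (fun k _ => hIIR' k 0 (C' j) le_rfl (hC'0 j))).symm
      _ ≤ ∫ s in (0:ℝ)..(C' j), (1:ℝ) := by
          have hgmeas : Measurable
              (fun s => ∑ k ∈ Finset.univ.filter (fun k => C' k ≤ C' j), R' k s) :=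
            Finset.measurable_sum _ (fun k _ => hR'meas k)
          have hgint : IntervalIntegrable
              (fun s => ∑ k ∈ Finset.univ.filter (fun k => C' k ≤ C' j), R' k s)
              volume 0 (C' j) := by
            refine hII _ hgmeas (fun t _ => Finset.sum_nonneg fun k _ => hR'0 k t)
              (fun t _ => ?_) 0 (C' j) le_rfl (hC'0 j)
            calc (∑ k ∈ Finset.univ.filter (fun k => C' k ≤ C' j), R' k t)
                ≤ ∑ k, R' k t :=
                  Finset.sum_le_sum_of_subset_of_nonneg (Finset.filter_subset _ _)
                    (fun k _ _ => hR'0 k t)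
              _ ≤ 1 := hR'sum t
          refine intervalIntegral.integral_mono_on (hC'0 j) hgint
            intervalIntegrable_const ?_
          intro x _
          calc (∑ k ∈ Finset.univ.filter (fun k => C' k ≤ C' j), R' k x)
              ≤ ∑ k, R' k x :=
                Finset.sum_le_sum_of_subset_of_nonneg (Finset.filter_subset _ _)
                  (fun k _ _ => hR'0 k x)
            _ ≤ 1 := hR'sum x
      _ = C' j := by simp
  -- a tie-broken total order compatible with C'
  set le2 : Fin n → Fin n → Prop := fun j k => C' j < C' k ∨ (C' j = C' k ∧ j ≤ k)
    with hle2_def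
  have hle2_total : ∀ j k, le2 j k ∨ le2 k j := by
    intro j k
    rcases lt_trichotomy (C' j) (C' k) with h | h | h
    · exact Or.inl (Or.inl h)
    · rcases le_total j k with h' | h'
      · exact Or.inl (Or.inr ⟨h, h'⟩)
      · exact Or.inr (Or.inr ⟨h.symm, h'⟩)
    · exact Or.inr (Or.inl h)
  have hle2_antisymm : ∀ j k, le2 j k → le2 k j → j = k := by
    intro j k h1 h2
    rcases h1 with h1 | h1 <;> rcases h2 with h2 | h2
    · exact absurd h2 (not_lt.2 h1.le)
    · exact absurd h1 (not_lt.2 h2.1.le)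
    · exact absurd h2 (not_lt.2 h1.1.le)
    · exact le_antisymm h1.2 h2.2
  have hle2_le : ∀ j k, le2 j k → C' j ≤ C' k := by
    intro j k h
    rcases h with h | h
    · exact h.le
    · exact h.1.le
  -- B is a lower bound on OPT
  set B : ℝ := ∑ j, ∑ k, (if le2 k j then w j * p k else 0) with hB_def
  have hOPT : B ≤ ∑ j, w j * C' j := by
    refine Finset.sum_le_sum (fun j _ => ?_)
    have h1 : (∑ k, (if le2 k j then w j * p k else 0))
        = w j * ∑ k, (if le2 k j then p k else 0) := by
      rw [Finset.mul_sum]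
      exact Finset.sum_congr rfl (fun k _ => by split_ifs <;> simp)
    rw [h1]
    refine mul_le_mul_of_nonneg_left ?_ (hw j)
    have h2 : (∑ k, (if le2 k j then p k else 0))
        = ∑ k ∈ Finset.univ.filter (fun k => le2 k j), p k := by
      rw [Finset.sum_filter]
    rw [h2]
    refine le_trans (Finset.sum_le_sum_of_subset_of_nonneg ?_
      (fun k _ _ => (hp k).le)) (hCap j)
    intro k hk
    rw [Finset.mem_filter] at hk ⊢
    exact ⟨Finset.mem_univ k, hle2_le k j hk.2⟩
  -- symmetrization: 2B dominates the min-sum plus the diagonal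
  have hB2 : (∑ j, ∑ k, min (w k * p j) (w j * p k)) + ∑ j, w j * p j ≤ 2 * B := by
    have hswap : B = ∑ j, ∑ k, (if le2 j k then w k * p j else 0) := by
      rw [hB_def, Finset.sum_comm]
    have hdiag : (∑ j, ∑ k, (if j = k then w j * p j else 0)) = ∑ j, w j * p j := by
      refine Finset.sum_congr rfl (fun j _ => ?_)
      simp
    have hkey : ∀ j k, min (w k * p j) (w j * p k) + (if j = k then w j * p j else 0)
        ≤ (if le2 k j then w j * p k else 0) + (if le2 j k then w k * p j else 0) := by
      intro j k
      by_cases h1 : le2 k j <;> by_cases h2 : le2 j k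
      · have hjk : j = k := (hle2_antisymm k j h1 h2).symm
        subst hjk
        rw [if_pos h1]
        simp
      · simp only [h1, h2, if_true, if_false]
        have : ¬ j = k := by
          intro hjk; subst hjk
          rcases hle2_total j j with h | h <;> exact h2 h
        simp only [this, if_false, add_zero]
        exact min_le_right _ _
      · simp only [h1, h2, if_true, if_false]
        have : ¬ j = k := by
          intro hjk; subst hjk
          rcases hle2_total j j with h | h <;> exact h1 h
        simp only [this, if_false, add_zero, zero_add]
        exact min_le_left _ _
      · exact absurd (hle2_total k j) (by simp [h1, h2])
    calc (∑ j, ∑ k, min (w k * p j) (w j * p k)) + ∑ j, w j * p j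
        = ∑ j, ∑ k, (min (w k * p j) (w j * p k)
            + (if j = k then w j * p j else 0)) := by
          rw [← hdiag, ← Finset.sum_add_distrib]
          exact Finset.sum_congr rfl (fun j _ => (Finset.sum_add_distrib).symm)
      _ ≤ ∑ j, ∑ k, ((if le2 k j then w j * p k else 0)
            + (if le2 j k then w k * p j else 0)) :=
          Finset.sum_le_sum (fun j _ => Finset.sum_le_sum (fun k _ => hkey j k))
      _ = B + B := by
          have hsplit2 : (∑ j, ∑ k, ((if le2 k j then w j * p k else 0)
              + (if le2 j k then w k * p j else 0)))
              = (∑ j, ∑ k, (if le2 k j then w j * p k else 0))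
              + ∑ j, ∑ k, (if le2 j k then w k * p j else 0) := by
            rw [← Finset.sum_add_distrib]
            exact Finset.sum_congr rfl (fun j _ => Finset.sum_add_distrib)
          rw [hsplit2, ← hB_def, ← hswap]
      _ = 2 * B := by ring
  -- put everything together
  have hD : 0 ≤ ∑ j, w j * p j :=
    Finset.sum_nonneg (fun j _ => mul_nonneg (hw j) (hp j).le)
  linarith
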